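/- arXiv:1506.05283 — 2 statements merged into one kernel-verified Lean document; each statement's English description precedes it below -/
import Mathlib

section
/- Let u be a word over {τ_1, ..., τ_{n−1}}, let ū be the element of VB_n represented by u, and let i, j ∈ {1, ..., n} with i ≠ j. Then ū δ_{i,j} ū^{−1} = δ_{i',j'}, where i' = θ(ū)(i) and j' = θ(ū)(j). -/
/-! The virtual braid group `VB (n+1)` on `n+1` strands, presented with generators
`σ_0, ..., σ_{n-1}` and `τ_0, ..., τ_{n-1}` (0-based indexing). -/

/-- The free-group generator `σ_i`. -/
def sigmaF {n : ℕ} (i : Fin n) : FreeGroup (Fin n ⊕ Fin n) := FreeGroup.of (Sum.inl i)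

/-- The free-group generator `τ_i`. -/
def tauF {n : ℕ} (i : Fin n) : FreeGroup (Fin n ⊕ Fin n) := FreeGroup.of (Sum.inr i)

/-- The defining relators of the virtual braid group on `n+1` strands:
`τ_i² = 1`; `σ_iσ_j = σ_jσ_i`, `σ_iτ_j = τ_jσ_i`, `τ_iτ_j = τ_jτ_i` for `|i−j| ≥ 2`;
`σ_iσ_jσ_i = σ_jσ_iσ_j`, `σ_iτ_jτ_i = τ_jτ_iσ_j`, `τ_iτ_jτ_i = τ_jτ_iτ_j` for `|i−j| = 1`. -/
def VBRels (n : ℕ) : Set (FreeGroup (Fin n ⊕ Fin n)) :=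
  {r | (∃ i : Fin n, r = tauF i * tauF i) ∨
    (∃ i j : Fin n, ((i : ℕ) + 2 ≤ j ∨ (j : ℕ) + 2 ≤ i) ∧
      (r = sigmaF i * sigmaF j * (sigmaF j * sigmaF i)⁻¹ ∨
       r = sigmaF i * tauF j * (tauF j * sigmaF i)⁻¹ ∨
       r = tauF i * tauF j * (tauF j * tauF i)⁻¹)) ∨
    (∃ i j : Fin n, ((i : ℕ) + 1 = j ∨ (j : ℕ) + 1 = i) ∧
      (r = sigmaF i * sigmaF j * sigmaF i * (sigmaF j * sigmaF i * sigmaF j)⁻¹ ∨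
       r = sigmaF i * tauF j * tauF i * (tauF j * tauF i * sigmaF j)⁻¹ ∨
       r = tauF i * tauF j * tauF i * (tauF j * tauF i * tauF j)⁻¹))}

/-- The virtual braid group on `n+1` strands. -/
abbrev VB (n : ℕ) := PresentedGroup (VBRels n)

/-- The generator `σ_i` of `VB`. -/
def sigmaV {n : ℕ} (i : Fin n) : VB n := PresentedGroup.of (Sum.inl i)

/-- The generator `τ_i` of `VB`. -/
def tauV {n : ℕ} (i : Fin n) : VB n := PresentedGroup.of (Sum.inr i)

/-- `σ` with a natural-number index (equal to `1` when out of range). -/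
def sigmaN {n : ℕ} (k : ℕ) : VB n := if h : k < n then sigmaV ⟨k, h⟩ else 1

/-- `τ` with a natural-number index (equal to `1` when out of range). -/
def tauN {n : ℕ} (k : ℕ) : VB n := if h : k < n then tauV ⟨k, h⟩ else 1

/-- The element `δ_{i,j}` of `VB n` (0-based strand indices `i ≠ j` in `{0, ..., n}`):
for `i < j`, `δ_{i,j} = τ_i ⋯ τ_{j-2} σ_{j-1} τ_{j-2} ⋯ τ_i` and
`δ_{j,i} = τ_i ⋯ τ_{j-1} σ_{j-1} τ_{j-1} ⋯ τ_i`. -/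
def deltaV {n : ℕ} (i j : ℕ) : VB n :=
  if i < j then
    ((List.range' i (j - 1 - i)).map tauN).prod * sigmaN (j - 1) *
      (((List.range' i (j - 1 - i)).reverse).map tauN).prod
  else if j < i then
    ((List.range' j (i - j)).map tauN).prod * sigmaN (i - 1) *
      (((List.range' j (i - j)).reverse).map tauN).prod
  else 1

namespace VBaux
variable {n : ℕ}

lemma mk_rel {r : FreeGroup (Fin n ⊕ Fin n)} (h : r ∈ VBRels n) :
    (PresentedGroup.mk _ r : VB n) = 1 :=
  PresentedGroup.one_of_mem h

lemma eq_of_rel {x y : FreeGroup (Fin n ⊕ Fin n)} (h : x * y⁻¹ ∈ VBRels n) :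
    (PresentedGroup.mk _ x : VB n) = PresentedGroup.mk _ y := by
  have h1 : (PresentedGroup.mk _ x : VB n) * (PresentedGroup.mk _ y)⁻¹ = 1 := by
    rw [← map_inv, ← map_mul]; exact mk_rel h
  exact mul_inv_eq_one.mp h1

lemma tauV_mk (i : Fin n) : tauV i = (PresentedGroup.mk _ (tauF i) : VB n) := rfl
lemma sigmaV_mk (i : Fin n) : sigmaV i = (PresentedGroup.mk _ (sigmaF i) : VB n) := rfl

@[simp] lemma tauN_sq (c : ℕ) : (tauN c : VB n) * tauN c = 1 := by
  unfold tauN; split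
  · have : (tauF (n := n) ⟨c, by assumption⟩ * tauF ⟨c, by assumption⟩) * (1 : FreeGroup _)⁻¹ ∈ VBRels n := by
      exact Or.inl ⟨⟨c, by assumption⟩, by simp⟩
    have := eq_of_rel this
    simpa [tauV_mk] using this
  · simp

@[simp] lemma tauN_cancel (c : ℕ) (x : VB n) : tauN c * (tauN c * x) = x := by
  rw [← mul_assoc, tauN_sq, one_mul]

lemma tauN_inv (c : ℕ) : (tauN c : VB n)⁻¹ = tauN c :=
  inv_eq_of_mul_eq_one_right (tauN_sq c)

lemma tt_comm {a b : ℕ} (h : a + 2 ≤ b ∨ b + 2 ≤ a) :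
    Commute (tauN a : VB n) (tauN b) := by
  unfold tauN
  split
  · split
    · rename_i ha hb
      show tauV ⟨a, ha⟩ * tauV ⟨b, hb⟩ = tauV ⟨b, hb⟩ * tauV ⟨a, ha⟩
      rw [tauV_mk, tauV_mk, ← map_mul, ← map_mul]
      exact eq_of_rel (Or.inr (Or.inl ⟨⟨a, ha⟩, ⟨b, hb⟩, h, Or.inr (Or.inr rfl)⟩))
    · exact Commute.one_right _
  · exact Commute.one_left _

lemma ts_comm {a b : ℕ} (h : a + 2 ≤ b ∨ b + 2 ≤ a) :
    Commute (tauN a : VB n) (sigmaN b) := by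
  unfold tauN sigmaN
  split
  · split
    · rename_i ha hb
      show tauV ⟨a, ha⟩ * sigmaV ⟨b, hb⟩ = sigmaV ⟨b, hb⟩ * tauV ⟨a, ha⟩
      rw [tauV_mk, sigmaV_mk, ← map_mul, ← map_mul]
      have := eq_of_rel (n := n)
        (x := sigmaF ⟨b, hb⟩ * tauF ⟨a, ha⟩) (y := tauF ⟨a, ha⟩ * sigmaF ⟨b, hb⟩)
        (Or.inr (Or.inl ⟨⟨b, hb⟩, ⟨a, ha⟩, by simpa using h.symm, Or.inr (Or.inl rfl)⟩))
      exact this.symm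
    · exact Commute.one_right _
  · exact Commute.one_left _

/-- braid relation for taus -/
lemma ttt {a : ℕ} (h : a + 1 < n) :
    (tauN a : VB n) * tauN (a+1) * tauN a = tauN (a+1) * tauN a * tauN (a+1) := by
  have ha : a < n := by omega
  rw [tauN, tauN, dif_pos ha, dif_pos h]
  rw [tauV_mk, tauV_mk, ← map_mul, ← map_mul,
    ← map_mul, ← map_mul]
  exact eq_of_rel (Or.inr (Or.inr ⟨⟨a, ha⟩, ⟨a+1, h⟩, Or.inl rfl, Or.inr (Or.inr rfl)⟩))

/-- mixed relation `σ_a τ_{a+1} τ_a = τ_{a+1} τ_a σ_{a+1}` -/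
lemma stt {a : ℕ} (h : a + 1 < n) :
    (sigmaN a : VB n) * tauN (a+1) * tauN a = tauN (a+1) * tauN a * sigmaN (a+1) := by
  have ha : a < n := by omega
  rw [tauN, tauN, sigmaN, sigmaN, dif_pos ha, dif_pos h, dif_pos ha, dif_pos h]
  rw [tauV_mk, tauV_mk, sigmaV_mk, sigmaV_mk, ← map_mul, ← map_mul,
    ← map_mul, ← map_mul]
  exact eq_of_rel (Or.inr (Or.inr ⟨⟨a, ha⟩, ⟨a+1, h⟩, Or.inl rfl, Or.inr (Or.inl rfl)⟩))

/-- `τ_{a+1} σ_a τ_{a+1} = τ_a σ_{a+1} τ_a` -/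
lemma tst {a : ℕ} (h : a + 1 < n) :
    (tauN (a+1) : VB n) * sigmaN a * tauN (a+1) = tauN a * sigmaN (a+1) * tauN a := by
  have h1 := stt (n := n) h
  calc (tauN (a+1) : VB n) * sigmaN a * tauN (a+1)
      = tauN (a+1) * (sigmaN a * tauN (a+1) * tauN a) * tauN a := by
        simp [mul_assoc]
    _ = tauN (a+1) * (tauN (a+1) * tauN a * sigmaN (a+1)) * tauN a := by rw [h1]
    _ = tauN a * sigmaN (a+1) * tauN a := by simp [mul_assoc]

/-- `τ_{a+1} τ_a σ_{a+1} τ_a τ_{a+1} = σ_a` -/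
lemma big2 {a : ℕ} (h : a + 1 < n) :
    (tauN (a+1) : VB n) * tauN a * sigmaN (a+1) * tauN a * tauN (a+1) = sigmaN a := by
  have h1 := tst (n := n) h
  calc (tauN (a+1) : VB n) * tauN a * sigmaN (a+1) * tauN a * tauN (a+1)
      = tauN (a+1) * (tauN a * sigmaN (a+1) * tauN a) * tauN (a+1) := by simp [mul_assoc]
    _ = tauN (a+1) * (tauN (a+1) * sigmaN a * tauN (a+1)) * tauN (a+1) := by rw [h1]
    _ = sigmaN a := by simp [mul_assoc]

/-- `τ_{a+1} τ_a τ_{a+1} σ_{a+1} τ_{a+1} τ_a τ_{a+1} = τ_a σ_a τ_a` -/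
lemma big1 {a : ℕ} (h : a + 1 < n) :
    (tauN (a+1) : VB n) * tauN a * tauN (a+1) * sigmaN (a+1) * tauN (a+1) * tauN a * tauN (a+1)
      = tauN a * sigmaN a * tauN a := by
  have hb := ttt (n := n) h
  have h1 := tst (n := n) h
  calc (tauN (a+1) : VB n) * tauN a * tauN (a+1) * sigmaN (a+1) * tauN (a+1) * tauN a * tauN (a+1)
      = (tauN (a+1) * tauN a * tauN (a+1)) * (sigmaN (a+1) * (tauN (a+1) * tauN a * tauN (a+1))) := by
        simp [mul_assoc]
    _ = (tauN a * tauN (a+1) * tauN a) * (sigmaN (a+1) * (tauN a * tauN (a+1) * tauN a)) := by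
        rw [← hb]
    _ = tauN a * tauN (a+1) * (tauN a * sigmaN (a+1) * tauN a) * tauN (a+1) * tauN a := by
        simp [mul_assoc]
    _ = tauN a * tauN (a+1) * (tauN (a+1) * sigmaN a * tauN (a+1)) * tauN (a+1) * tauN a := by
        rw [h1]
    _ = tauN a * sigmaN a * tauN a := by simp [mul_assoc]

/-- `τ_a τ_{a+1} σ_{a+1} τ_{a+1} τ_a = τ_{a+1} τ_a σ_a τ_a τ_{a+1}` -/
lemma ttstt {a : ℕ} (h : a + 1 < n) :
    (tauN a : VB n) * tauN (a+1) * sigmaN (a+1) * tauN (a+1) * tauN a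
      = tauN (a+1) * tauN a * sigmaN a * tauN a * tauN (a+1) := by
  have hb := ttt (n := n) h
  have h1 := tst (n := n) h
  have h1' : (sigmaN (a+1) : VB n) = tauN a * (tauN (a+1) * sigmaN a * tauN (a+1)) * tauN a := by
    rw [h1]; simp [mul_assoc]
  calc (tauN a : VB n) * tauN (a+1) * sigmaN (a+1) * tauN (a+1) * tauN a
      = tauN a * tauN (a+1) * (tauN a * (tauN (a+1) * sigmaN a * tauN (a+1)) * tauN a) *
          tauN (a+1) * tauN a := by rw [← h1']
    _ = (tauN a * tauN (a+1) * tauN a) * (tauN (a+1) * sigmaN a * tauN (a+1)) *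
          (tauN a * tauN (a+1) * tauN a) := by simp [mul_assoc]
    _ = (tauN (a+1) * tauN a * tauN (a+1)) * (tauN (a+1) * sigmaN a * tauN (a+1)) *
          (tauN (a+1) * tauN a * tauN (a+1)) := by rw [hb]
    _ = tauN (a+1) * tauN a * sigmaN a * tauN a * tauN (a+1) := by simp [mul_assoc]

/-- Product `τ_a τ_{a+1} ⋯ τ_{b-1}`. -/
def TT (n : ℕ) (a b : ℕ) : VB n := ((List.range' a (b - a)).map tauN).prod

lemma TT_nil {a b : ℕ} (h : b ≤ a) : TT n a b = 1 := by
  simp [TT, Nat.sub_eq_zero_of_le h]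

lemma TT_concat {a b : ℕ} (h : a ≤ b) : TT n a (b+1) = TT n a b * tauN b := by
  have h1 : b + 1 - a = (b - a) + 1 := by omega
  have h2 : a + 1 * (b - a) = b := by omega
  rw [TT, h1, List.range'_concat, h2, TT]
  simp

lemma TT_cons {a b : ℕ} (h : a < b) : TT n a b = tauN a * TT n (a+1) b := by
  have h1 : b - a = (b - (a+1)) + 1 := by omega
  rw [TT, h1, List.range'_succ, TT]
  simp

lemma rev_prod (l : List ℕ) :
    ((l.reverse).map (tauN (n := n))).prod = ((l.map tauN).prod)⁻¹ := by
  induction l with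
  | nil => simp
  | cons x t ih =>
    rw [List.reverse_cons, List.map_append, List.prod_append, ih]
    simp [tauN_inv]

lemma tau_comm_TT {c a b : ℕ} (h : c + 2 ≤ a ∨ b + 1 ≤ c) :
    Commute (tauN c : VB n) (TT n a b) := by
  induction b with
  | zero => rw [TT_nil (by omega)]; exact Commute.one_right _
  | succ b ih =>
    by_cases hab : b + 1 ≤ a
    · rw [TT_nil hab]; exact Commute.one_right _
    · rw [TT_concat (by omega)]
      exact (ih (by omega)).mul_right (tt_comm (by omega))

lemma sigma_comm_TT {c a b : ℕ} (h : c + 2 ≤ a ∨ b + 1 ≤ c) :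
    Commute (sigmaN c : VB n) (TT n a b) := by
  induction b with
  | zero => rw [TT_nil (by omega)]; exact Commute.one_right _
  | succ b ih =>
    by_cases hab : b + 1 ≤ a
    · rw [TT_nil hab]; exact Commute.one_right _
    · rw [TT_concat (by omega)]
      exact (ih (by omega)).mul_right ((ts_comm (by omega)).symm)

lemma slide {d a b : ℕ} (ha : a ≤ d) (hb : d + 1 < b) (hn : d + 1 < n) :
    (tauN (d+1) : VB n) * TT n a b = TT n a b * tauN d := by
  induction b with
  | zero => omega
  | succ b ih =>
    by_cases hb2 : d + 1 < b
    · rw [TT_concat (by omega), ← mul_assoc, ih hb2, mul_assoc, mul_assoc,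
        (tt_comm (a := d) (b := b) (by omega)).eq]
    · have hbd : b = d + 1 := by omega
      subst hbd
      rw [TT_concat (by omega), TT_concat (by omega)]
      have hcomm := (tau_comm_TT (n := n) (c := d+1) (a := a) (b := d) (Or.inr (by omega))).eq
      calc (tauN (d+1) : VB n) * (TT n a d * tauN d * tauN (d+1))
          = (tauN (d+1) * TT n a d) * (tauN d * tauN (d+1)) := by simp [mul_assoc]
        _ = TT n a d * (tauN (d+1) * tauN d * tauN (d+1)) := by rw [hcomm]; simp [mul_assoc]
        _ = TT n a d * (tauN d * tauN (d+1) * tauN d) := by rw [ttt hn]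
        _ = TT n a d * tauN d * tauN (d+1) * tauN d := by simp [mul_assoc]


lemma delta_lt {i j : ℕ} (h : i < j) :
    (deltaV i j : VB n) = TT n i (j-1) * sigmaN (j-1) * (TT n i (j-1))⁻¹ := by
  rw [deltaV, if_pos h, rev_prod]
  rfl

lemma delta_gt {i j : ℕ} (h : j < i) :
    (deltaV i j : VB n) = TT n j i * sigmaN (i-1) * (TT n j i)⁻¹ := by
  rw [deltaV, if_neg (by omega), if_pos h, rev_prod]
  rfl

lemma conj_fix {c : ℕ} {X : VB n} (H : Commute (tauN c) X) :
    tauN c * X * tauN c = X := by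
  rw [H.eq, mul_assoc, tauN_sq, mul_one]

lemma key_lt {c i j : ℕ} (hc : c < n) (hj : j ≤ n) (hlt : i < j) :
    tauN c * (deltaV i j : VB n) * tauN c =
      deltaV (if i = c then c+1 else if i = c+1 then c else i)
             (if j = c then c+1 else if j = c+1 then c else j) := by
  by_cases h1 : c + 2 ≤ i
  · -- everything commutes
    rw [if_neg (show i ≠ c by omega), if_neg (show i ≠ c+1 by omega),
      if_neg (show j ≠ c by omega), if_neg (show j ≠ c+1 by omega), delta_lt hlt]
    have Ht : Commute (tauN c : VB n) (TT n i (j-1)) := tau_comm_TT (Or.inl h1)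
    have Hs : Commute (tauN c : VB n) (sigmaN (j-1)) := ts_comm (Or.inl (by omega))
    exact conj_fix ((Ht.mul_right Hs).mul_right Ht.inv_right)
  by_cases h2 : c + 1 = i
  · subst h2
    rw [if_neg (show c+1 ≠ c by omega), if_pos rfl,
      if_neg (show j ≠ c by omega), if_neg (show j ≠ c+1 by omega),
      delta_lt hlt, delta_lt (show c < j by omega), TT_cons (show c < j-1 by omega)]
    simp [mul_assoc, mul_inv_rev, tauN_inv]
  by_cases h3 : c = i ∧ j = i + 1
  · obtain ⟨rfl, rfl⟩ := h3
    rw [if_pos rfl, if_neg (show c+1 ≠ c by omega), if_pos rfl,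
      delta_lt hlt, delta_gt (show c < c+1 by omega),
      TT_concat (le_refl c)]
    simp [mul_assoc, mul_inv_rev, tauN_inv, TT_nil]
  by_cases h4 : c = i
  · subst h4
    rw [if_pos rfl, if_neg (show j ≠ c by omega), if_neg (show j ≠ c+1 by omega),
      delta_lt hlt, delta_lt (show c+1 < j by omega), TT_cons (show c < j-1 by omega)]
    simp [mul_assoc, mul_inv_rev, tauN_inv]
  by_cases h5 : c + 1 < j
  · -- interior: i < c, c+1 < j
    obtain ⟨d, rfl⟩ : ∃ d, c = d + 1 := ⟨c - 1, by omega⟩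
    rw [if_neg (show i ≠ d+1 by omega), if_neg (show i ≠ d+1+1 by omega),
      if_neg (show j ≠ d+1 by omega), if_neg (show j ≠ d+1+1 by omega), delta_lt hlt]
    have hA : (tauN (d+1) : VB n) * TT n i (j-1) = TT n i (j-1) * tauN d :=
      slide (by omega) (by omega) hc
    have hA' : (TT n i (j-1) : VB n)⁻¹ * tauN (d+1) = tauN d * (TT n i (j-1))⁻¹ := by
      have h := congrArg Inv.inv hA
      simpa [mul_inv_rev, tauN_inv] using h
    have hS : Commute (tauN d : VB n) (sigmaN (j-1)) := ts_comm (Or.inl (by omega))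
    calc tauN (d+1) * (TT n i (j-1) * sigmaN (j-1) * (TT n i (j-1))⁻¹) * tauN (d+1)
        = (tauN (d+1) * TT n i (j-1)) * sigmaN (j-1) * ((TT n i (j-1))⁻¹ * tauN (d+1)) := by
          simp [mul_assoc]
      _ = (TT n i (j-1) * tauN d) * sigmaN (j-1) * (tauN d * (TT n i (j-1))⁻¹) := by
          rw [hA, hA']
      _ = TT n i (j-1) * ((tauN d * sigmaN (j-1)) * tauN d) * (TT n i (j-1))⁻¹ := by
          simp [mul_assoc]
      _ = TT n i (j-1) * ((sigmaN (j-1) * tauN d) * tauN d) * (TT n i (j-1))⁻¹ := by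
          rw [hS.eq]
      _ = TT n i (j-1) * sigmaN (j-1) * (TT n i (j-1))⁻¹ := by
          simp [mul_assoc]
  by_cases h6 : c + 1 = j
  · -- c = j - 1, i < c
    obtain ⟨d, rfl⟩ : ∃ d, c = d + 1 := ⟨c - 1, by omega⟩
    subst h6
    rw [if_neg (show i ≠ d+1 by omega), if_neg (show i ≠ d+1+1 by omega),
      if_neg (show d+1+1 ≠ d+1 by omega), if_pos rfl,
      delta_lt hlt, delta_lt (show i < d+1 by omega)]
    have e1 : d + 1 + 1 - 1 = d + 1 := by omega
    have e2 : d + 1 - 1 = d := by omega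
    rw [e1, e2, TT_concat (show i ≤ d by omega)]
    have hcomm : Commute (tauN (d+1) : VB n) (TT n i d) := tau_comm_TT (Or.inr (by omega))
    calc tauN (d+1) * (TT n i d * tauN d * sigmaN (d+1) * (TT n i d * tauN d)⁻¹) * tauN (d+1)
        = (tauN (d+1) * TT n i d) * (tauN d * sigmaN (d+1) * tauN d) *
            ((TT n i d)⁻¹ * tauN (d+1)) := by simp [mul_inv_rev, tauN_inv, mul_assoc]
      _ = (TT n i d * tauN (d+1)) * (tauN d * sigmaN (d+1) * tauN d) *
            (tauN (d+1) * (TT n i d)⁻¹) := by rw [hcomm.eq, ← hcomm.inv_right.eq]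
      _ = TT n i d * (tauN (d+1) * tauN d * sigmaN (d+1) * tauN d * tauN (d+1)) *
            (TT n i d)⁻¹ := by simp [mul_assoc]
      _ = TT n i d * sigmaN d * (TT n i d)⁻¹ := by rw [big2 hc]
  by_cases h7 : c = j
  · -- c = j
    subst h7
    obtain ⟨d, rfl⟩ : ∃ d, c = d + 1 := ⟨c - 1, by omega⟩
    rw [if_neg (show i ≠ d+1 by omega), if_neg (show i ≠ d+1+1 by omega),
      if_pos rfl, delta_lt hlt, delta_lt (show i < d+1+1 by omega)]
    have e1 : d + 1 - 1 = d := by omega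
    have e2 : d + 1 + 1 - 1 = d + 1 := by omega
    rw [e1, e2, TT_concat (show i ≤ d by omega)]
    have hcomm : Commute (tauN (d+1) : VB n) (TT n i d) := tau_comm_TT (Or.inr (by omega))
    calc tauN (d+1) * (TT n i d * sigmaN d * (TT n i d)⁻¹) * tauN (d+1)
        = (tauN (d+1) * TT n i d) * sigmaN d * ((TT n i d)⁻¹ * tauN (d+1)) := by
          simp [mul_assoc]
      _ = (TT n i d * tauN (d+1)) * sigmaN d * (tauN (d+1) * (TT n i d)⁻¹) := by
          rw [hcomm.eq, ← hcomm.inv_right.eq]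
      _ = TT n i d * (tauN (d+1) * sigmaN d * tauN (d+1)) * (TT n i d)⁻¹ := by
          simp [mul_assoc]
      _ = TT n i d * (tauN d * sigmaN (d+1) * tauN d) * (TT n i d)⁻¹ := by
          rw [tst hc]
      _ = TT n i d * tauN d * sigmaN (d+1) * (TT n i d * tauN d)⁻¹ := by
          simp [mul_inv_rev, tauN_inv, mul_assoc]
  · -- c ≥ j + 1
    rw [if_neg (show i ≠ c by omega), if_neg (show i ≠ c+1 by omega),
      if_neg (show j ≠ c by omega), if_neg (show j ≠ c+1 by omega), delta_lt hlt]
    have Ht : Commute (tauN c : VB n) (TT n i (j-1)) := tau_comm_TT (Or.inr (by omega))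
    have Hs : Commute (tauN c : VB n) (sigmaN (j-1)) := ts_comm (Or.inr (by omega))
    exact conj_fix ((Ht.mul_right Hs).mul_right Ht.inv_right)

lemma key_gt {c i j : ℕ} (hc : c < n) (hi : i ≤ n) (hgt : j < i) :
    tauN c * (deltaV i j : VB n) * tauN c =
      deltaV (if i = c then c+1 else if i = c+1 then c else i)
             (if j = c then c+1 else if j = c+1 then c else j) := by
  by_cases h1 : c + 2 ≤ j
  · rw [if_neg (show i ≠ c by omega), if_neg (show i ≠ c+1 by omega),
      if_neg (show j ≠ c by omega), if_neg (show j ≠ c+1 by omega), delta_gt hgt]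
    have Ht : Commute (tauN c : VB n) (TT n j i) := tau_comm_TT (Or.inl h1)
    have Hs : Commute (tauN c : VB n) (sigmaN (i-1)) := ts_comm (Or.inl (by omega))
    exact conj_fix ((Ht.mul_right Hs).mul_right Ht.inv_right)
  by_cases h2 : c + 1 = j
  · subst h2
    rw [if_neg (show i ≠ c by omega), if_neg (show i ≠ c+1 by omega),
      if_neg (show c+1 ≠ c by omega), if_pos rfl,
      delta_gt hgt, delta_gt (show c < i by omega), TT_cons (show c < i by omega)]
    simp [mul_assoc, mul_inv_rev, tauN_inv]
  by_cases h3 : c = j ∧ i = j + 1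
  · obtain ⟨rfl, rfl⟩ := h3
    rw [if_neg (show c+1 ≠ c by omega), if_pos rfl, if_pos rfl,
      delta_gt hgt, delta_lt (show c < c+1 by omega), TT_concat (le_refl c)]
    simp [mul_assoc, mul_inv_rev, tauN_inv, TT_nil]
  by_cases h4 : c = j
  · subst h4
    rw [if_neg (show i ≠ c by omega), if_neg (show i ≠ c+1 by omega), if_pos rfl,
      delta_gt hgt, delta_gt (show c+1 < i by omega), TT_cons (show c < i by omega)]
    simp [mul_assoc, mul_inv_rev, tauN_inv]
  by_cases h5 : c + 2 ≤ i
  · -- interior: j < c, c + 2 ≤ i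
    obtain ⟨d, rfl⟩ : ∃ d, c = d + 1 := ⟨c - 1, by omega⟩
    rw [if_neg (show i ≠ d+1 by omega), if_neg (show i ≠ d+1+1 by omega),
      if_neg (show j ≠ d+1 by omega), if_neg (show j ≠ d+1+1 by omega), delta_gt hgt]
    have hA : (tauN (d+1) : VB n) * TT n j i = TT n j i * tauN d :=
      slide (by omega) (by omega) hc
    have hA' : (TT n j i : VB n)⁻¹ * tauN (d+1) = tauN d * (TT n j i)⁻¹ := by
      have h := congrArg Inv.inv hA
      simpa [mul_inv_rev, tauN_inv] using h
    have hS : Commute (tauN d : VB n) (sigmaN (i-1)) := ts_comm (Or.inl (by omega))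
    calc tauN (d+1) * (TT n j i * sigmaN (i-1) * (TT n j i)⁻¹) * tauN (d+1)
        = (tauN (d+1) * TT n j i) * sigmaN (i-1) * ((TT n j i)⁻¹ * tauN (d+1)) := by
          simp [mul_assoc]
      _ = (TT n j i * tauN d) * sigmaN (i-1) * (tauN d * (TT n j i)⁻¹) := by
          rw [hA, hA']
      _ = TT n j i * ((tauN d * sigmaN (i-1)) * tauN d) * (TT n j i)⁻¹ := by
          simp [mul_assoc]
      _ = TT n j i * ((sigmaN (i-1) * tauN d) * tauN d) * (TT n j i)⁻¹ := by
          rw [hS.eq]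
      _ = TT n j i * sigmaN (i-1) * (TT n j i)⁻¹ := by
          simp [mul_assoc]
  by_cases h6 : c + 1 = i
  · -- c = i - 1, with j + 1 ≤ c
    obtain ⟨d, rfl⟩ : ∃ d, c = d + 1 := ⟨c - 1, by omega⟩
    subst h6
    rw [if_neg (show d+1+1 ≠ d+1 by omega), if_pos rfl,
      if_neg (show j ≠ d+1 by omega), if_neg (show j ≠ d+1+1 by omega),
      delta_gt hgt, delta_gt (show j < d+1 by omega)]
    have e1 : d + 1 + 1 - 1 = d + 1 := by omega
    have e2 : d + 1 - 1 = d := by omega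
    rw [e1, e2, TT_concat (show j ≤ d + 1 by omega), TT_concat (show j ≤ d by omega)]
    have hcomm : Commute (tauN (d+1) : VB n) (TT n j d) := tau_comm_TT (Or.inr (by omega))
    calc tauN (d+1) * (TT n j d * tauN d * tauN (d+1) * sigmaN (d+1) *
            (TT n j d * tauN d * tauN (d+1))⁻¹) * tauN (d+1)
        = (tauN (d+1) * TT n j d) *
            (tauN d * tauN (d+1) * sigmaN (d+1) * tauN (d+1) * tauN d) *
            ((TT n j d)⁻¹ * tauN (d+1)) := by simp [mul_inv_rev, tauN_inv, mul_assoc]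
      _ = (TT n j d * tauN (d+1)) *
            (tauN d * tauN (d+1) * sigmaN (d+1) * tauN (d+1) * tauN d) *
            (tauN (d+1) * (TT n j d)⁻¹) := by rw [hcomm.eq, ← hcomm.inv_right.eq]
      _ = TT n j d * (tauN (d+1) * tauN d * tauN (d+1) * sigmaN (d+1) * tauN (d+1) *
            tauN d * tauN (d+1)) * (TT n j d)⁻¹ := by simp [mul_assoc]
      _ = TT n j d * (tauN d * sigmaN d * tauN d) * (TT n j d)⁻¹ := by rw [big1 hc]
      _ = TT n j d * tauN d * sigmaN d * (TT n j d * tauN d)⁻¹ := by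
          simp [mul_inv_rev, tauN_inv, mul_assoc]
  by_cases h7 : c = i
  · subst h7
    obtain ⟨d, rfl⟩ : ∃ d, c = d + 1 := ⟨c - 1, by omega⟩
    rw [if_pos rfl, if_neg (show j ≠ d+1 by omega), if_neg (show j ≠ d+1+1 by omega),
      delta_gt hgt, delta_gt (show j < d+1+1 by omega)]
    have e1 : d + 1 - 1 = d := by omega
    have e2 : d + 1 + 1 - 1 = d + 1 := by omega
    rw [e1, e2, TT_concat (show j ≤ d + 1 by omega), TT_concat (show j ≤ d by omega)]
    have hcomm : Commute (tauN (d+1) : VB n) (TT n j d) := tau_comm_TT (Or.inr (by omega))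
    calc tauN (d+1) * (TT n j d * tauN d * sigmaN d * (TT n j d * tauN d)⁻¹) * tauN (d+1)
        = (tauN (d+1) * TT n j d) * (tauN d * sigmaN d * tauN d) *
            ((TT n j d)⁻¹ * tauN (d+1)) := by simp [mul_inv_rev, tauN_inv, mul_assoc]
      _ = (TT n j d * tauN (d+1)) * (tauN d * sigmaN d * tauN d) *
            (tauN (d+1) * (TT n j d)⁻¹) := by rw [hcomm.eq, ← hcomm.inv_right.eq]
      _ = TT n j d * (tauN (d+1) * tauN d * sigmaN d * tauN d * tauN (d+1)) *
            (TT n j d)⁻¹ := by simp [mul_assoc]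
      _ = TT n j d * (tauN d * tauN (d+1) * sigmaN (d+1) * tauN (d+1) * tauN d) *
            (TT n j d)⁻¹ := by rw [ttstt hc]
      _ = TT n j d * tauN d * tauN (d+1) * sigmaN (d+1) *
            (TT n j d * tauN d * tauN (d+1))⁻¹ := by
          simp [mul_inv_rev, tauN_inv, mul_assoc]
  · -- c ≥ i + 1
    rw [if_neg (show i ≠ c by omega), if_neg (show i ≠ c+1 by omega),
      if_neg (show j ≠ c by omega), if_neg (show j ≠ c+1 by omega), delta_gt hgt]
    have Ht : Commute (tauN c : VB n) (TT n j i) := tau_comm_TT (Or.inr (by omega))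
    have Hs : Commute (tauN c : VB n) (sigmaN (i-1)) := ts_comm (Or.inr (by omega))
    exact conj_fix ((Ht.mul_right Hs).mul_right Ht.inv_right)

lemma key {c i j : ℕ} (hc : c < n) (hi : i ≤ n) (hj : j ≤ n) (hij : i ≠ j) :
    tauN c * (deltaV i j : VB n) * tauN c =
      deltaV (if i = c then c+1 else if i = c+1 then c else i)
             (if j = c then c+1 else if j = c+1 then c else j) := by
  rcases Nat.lt_or_ge i j with h | h
  · exact key_lt hc hj h
  · exact key_gt hc hi (by omega)

lemma tauV_eq_tauN (k : Fin n) : tauV k = tauN (k : ℕ) := by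
  rw [tauN, dif_pos k.isLt, Fin.eta]

lemma swap_coe (k : Fin n) (x : Fin (n+1)) :
    ((Equiv.swap k.castSucc k.succ x : Fin (n+1)) : ℕ) =
      if (x : ℕ) = (k : ℕ) then (k : ℕ) + 1
      else if (x : ℕ) = (k : ℕ) + 1 then (k : ℕ) else (x : ℕ) := by
  by_cases h1 : x = k.castSucc
  · subst h1
    rw [Equiv.swap_apply_left, if_pos (by simp)]
    simp
  · by_cases h2 : x = k.succ
    · subst h2
      rw [Equiv.swap_apply_right, if_neg (by simp), if_pos (by simp)]
      simp
    · rw [Equiv.swap_apply_of_ne_of_ne h1 h2,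
        if_neg (fun h => h1 (Fin.ext (by simpa using h))),
        if_neg (fun h => h2 (Fin.ext (by simpa using h)))]

end VBaux

/-- Let `u` be a word over `{τ_0, ..., τ_{n-1}}`, let `ū ∈ VB_{n+1}` be
the element it represents, and let `i ≠ j` be strands. Then
`ū δ_{i,j} ū⁻¹ = δ_{θ(ū)(i), θ(ū)(j)}`, where `θ : VB_{n+1} → S_{n+1}` is the
homomorphism with `θ(σ_k) = 1` and `θ(τ_k) = (k, k+1)`. -/
theorem tau_conj_delta (n : ℕ) (θ : VB n →* Equiv.Perm (Fin (n + 1)))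
    (hσ : ∀ k : Fin n, θ (sigmaV k) = 1)
    (hτ : ∀ k : Fin n, θ (tauV k) = Equiv.swap k.castSucc k.succ)
    (u : List (Fin n)) (i j : Fin (n + 1)) (hij : i ≠ j) :
    (u.map (fun k => tauV k)).prod * deltaV (i : ℕ) (j : ℕ) *
        ((u.map (fun k => tauV k)).prod)⁻¹ =
      deltaV ((θ (u.map (fun k => tauV k)).prod i : Fin (n + 1)) : ℕ)
        ((θ (u.map (fun k => tauV k)).prod j : Fin (n + 1)) : ℕ) := by
  induction u with
  | nil => simp
  | cons k u ih =>
    simp only [List.map_cons, List.prod_cons, map_mul, Equiv.Perm.mul_apply]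
    set P := (List.map (fun k => tauV k) u).prod with hP
    have hinj := (θ P).injective
    have hne : ((θ P i : Fin (n+1)) : ℕ) ≠ ((θ P j : Fin (n+1)) : ℕ) :=
      fun h => hij (hinj (Fin.ext h))
    have hki : ((θ P i : Fin (n+1)) : ℕ) ≤ n := Nat.lt_succ_iff.mp (θ P i).isLt
    have hkj : ((θ P j : Fin (n+1)) : ℕ) ≤ n := Nat.lt_succ_iff.mp (θ P j).isLt
    calc tauV k * P * deltaV (i : ℕ) (j : ℕ) * (tauV k * P)⁻¹
        = tauV k * (P * deltaV (i : ℕ) (j : ℕ) * P⁻¹) * (tauV k)⁻¹ := by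
          simp [mul_assoc, mul_inv_rev]
      _ = tauN (k : ℕ) * deltaV ((θ P i : Fin (n+1)) : ℕ) ((θ P j : Fin (n+1)) : ℕ) *
            tauN (k : ℕ) := by
          rw [ih, VBaux.tauV_eq_tauN, VBaux.tauN_inv]
      _ = deltaV
            (if ((θ P i : Fin (n+1)) : ℕ) = (k : ℕ) then (k : ℕ) + 1
              else if ((θ P i : Fin (n+1)) : ℕ) = (k : ℕ) + 1 then (k : ℕ)
              else ((θ P i : Fin (n+1)) : ℕ))
            (if ((θ P j : Fin (n+1)) : ℕ) = (k : ℕ) then (k : ℕ) + 1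
              else if ((θ P j : Fin (n+1)) : ℕ) = (k : ℕ) + 1 then (k : ℕ)
              else ((θ P j : Fin (n+1)) : ℕ)) :=
          VBaux.key k.isLt hki hkj hne
      _ = deltaV ((θ (tauV k) (θ P i) : Fin (n+1)) : ℕ)
            ((θ (tauV k) (θ P j) : Fin (n+1)) : ℕ) := by
          rw [hτ k, VBaux.swap_coe, VBaux.swap_coe]
end

section
/- Let X be a full and indecomposable nonempty subset of S = {δ_{i,j} : 1 ≤ i ≠ j ≤ n}. Then there exist a permutation g ∈ S_n and an integer m ∈ {2, ..., n} such that either X = g·Z_m, or X = g·Z̃_m with m ≥ 3, where Z_m = {δ_{1,2}, ..., δ_{m−1,m}} and Z̃_m = {δ_{1,2}, ..., δ_{m−1,m}, δ_{m,1}}, and g acts by g·δ_{i,j} = δ_{g(i),g(j)}. -/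
/-! The group `KB n`, presented with generators `δ_{i,j}` for `i ≠ j` in `Fin n`, and
relations `δ_{i,j}δ_{k,l} = δ_{k,l}δ_{i,j}` for `i,j,k,l` distinct and
`δ_{i,j}δ_{j,k}δ_{i,j} = δ_{j,k}δ_{i,j}δ_{j,k}` for `i,j,k` distinct. -/

/-- The generating set `S = {δ_{i,j} : i ≠ j}`, encoded as pairs of distinct indices. -/
abbrev KBGen (n : ℕ) := {p : Fin n × Fin n // p.1 ≠ p.2}

/-- The free-group generator `δ_{i,j}`. -/
def deltaF {n : ℕ} (i j : Fin n) (h : i ≠ j) : FreeGroup (KBGen n) := FreeGroup.of ⟨(i, j), h⟩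

/-- The defining relators of `KB n`. -/
def KBRels (n : ℕ) : Set (FreeGroup (KBGen n)) :=
  {r | (∃ (i j k l : Fin n) (hij : i ≠ j) (hkl : k ≠ l),
          i ≠ k ∧ i ≠ l ∧ j ≠ k ∧ j ≠ l ∧
          r = deltaF i j hij * deltaF k l hkl * (deltaF k l hkl * deltaF i j hij)⁻¹) ∨
       (∃ (i j k : Fin n) (hij : i ≠ j) (hjk : j ≠ k) (_ : i ≠ k),
          r = deltaF i j hij * deltaF j k hjk * deltaF i j hij *
            (deltaF j k hjk * deltaF i j hij * deltaF j k hjk)⁻¹)}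

/-- The group `KB n` (the kernel of `VB_n → S_n`, via Rabenda's presentation). -/
abbrev KB (n : ℕ) := PresentedGroup (KBRels n)

/-- The generator `δ_{i,j}` of `KB n`. -/
def deltaK {n : ℕ} (i j : Fin n) (h : i ≠ j) : KB n := PresentedGroup.of ⟨(i, j), h⟩

/-- The subgroup `KB_n(Y)` generated by a subset `Y` of the generating set. -/
def KBsub {n : ℕ} (Y : Set (KBGen n)) : Subgroup (KB n) :=
  Subgroup.closure (PresentedGroup.of '' Y)

/-- The support of the generator `δ_{i,j}` is `{i, j}`. -/
def KBsupp {n : ℕ} (s : KBGen n) : Set (Fin n) := {s.1.1, s.1.2}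

/-- The support of a subset of the generating set. -/
def KBsuppSet {n : ℕ} (X : Set (KBGen n)) : Set (Fin n) := ⋃ s ∈ X, KBsupp s

/-- Two distinct generators `δ_{i,j}` and `δ_{k,l}` are connected by an edge of the
Coxeter diagram `VΓ_n` iff either their supports `{i,j}` and `{k,l}` are disjoint
(label 2), or they are of the form `δ_{i,j}`, `δ_{j,k}` with `i,j,k` distinct, i.e. the
target of one equals the source of the other (label 3). -/
def KBedge {n : ℕ} (s t : KBGen n) : Prop :=
  (Disjoint ({s.1.1, s.1.2} : Set (Fin n)) {t.1.1, t.1.2}) ∨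
  (s.1.2 = t.1.1 ∧ s.1.1 ≠ t.1.2) ∨ (t.1.2 = s.1.1 ∧ t.1.1 ≠ s.1.2)

/-- A subset `X` of the generating set is full if any two distinct elements of `X` are
connected by an edge of `VΓ_n`. -/
def KBfull {n : ℕ} (X : Set (KBGen n)) : Prop :=
  ∀ s ∈ X, ∀ t ∈ X, s ≠ t → KBedge s t

/-- `X` is indecomposable if it is not the union of two nonempty subsets with disjoint
supports. -/
def KBindecomposable {n : ℕ} (X : Set (KBGen n)) : Prop :=
  ¬ ∃ X1 X2 : Set (KBGen n), X1.Nonempty ∧ X2.Nonempty ∧ X = X1 ∪ X2 ∧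
      Disjoint (KBsuppSet X1) (KBsuppSet X2)

/-- The action of a permutation `g` on generators: `g · δ_{i,j} = δ_{g(i),g(j)}`. -/
def permGen {n : ℕ} (g : Equiv.Perm (Fin n)) (s : KBGen n) : KBGen n :=
  ⟨(g s.1.1, g s.1.2), g.injective.ne s.2⟩

/-- The set `Z_m = {δ_{0,1}, δ_{1,2}, ..., δ_{m-2,m-1}}` (0-based indexing). -/
def Zseg (n m : ℕ) : Set (KBGen n) :=
  {s | (s.1.1 : ℕ) + 1 = (s.1.2 : ℕ) ∧ (s.1.2 : ℕ) < m}

/-- The set `Z̃_m = Z_m ∪ {δ_{m-1,0}}` (0-based indexing). -/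
def Zcycle (n m : ℕ) : Set (KBGen n) :=
  Zseg n m ∪ {s | (s.1.1 : ℕ) = m - 1 ∧ (s.1.2 : ℕ) = 0}

namespace KBaux

variable {n : ℕ} {X : Set (KBGen n)}

/-- The edge relation determined by `X` : `E X i j` iff `δ_{i,j} ∈ X`. -/
def E (X : Set (KBGen n)) (i j : Fin n) : Prop :=
  ∃ h : i ≠ j, (⟨(i, j), h⟩ : KBGen n) ∈ X

theorem E_ne {i j : Fin n} (h : E X i j) : i ≠ j := h.1

theorem out_unique (hfull : KBfull X) {i j k : Fin n} (h1 : E X i j) (h2 : E X i k) :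
    j = k := by
  obtain ⟨hij, hs⟩ := h1
  obtain ⟨hik, ht⟩ := h2
  by_contra hjk
  have hne : (⟨(i, j), hij⟩ : KBGen n) ≠ ⟨(i, k), hik⟩ := by
    simp [Subtype.ext_iff, Prod.ext_iff, hjk]
  rcases hfull _ hs _ ht hne with hd | ⟨h1, _⟩ | ⟨h1, _⟩
  · have hm1 : i ∈ ({i, j} : Set (Fin n)) := by simp
    have hm2 : i ∈ ({i, k} : Set (Fin n)) := by simp
    exact Set.disjoint_left.mp hd hm1 hm2
  · exact hij h1.symm
  · exact hik h1.symm

theorem in_unique (hfull : KBfull X) {i j k : Fin n} (h1 : E X i k) (h2 : E X j k) :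
    i = j := by
  obtain ⟨hik, hs⟩ := h1
  obtain ⟨hjk, ht⟩ := h2
  by_contra hij
  have hne : (⟨(i, k), hik⟩ : KBGen n) ≠ ⟨(j, k), hjk⟩ := by
    simp [Subtype.ext_iff, Prod.ext_iff, hij]
  rcases hfull _ hs _ ht hne with hd | ⟨h1, _⟩ | ⟨h1, _⟩
  · have hm1 : k ∈ ({i, k} : Set (Fin n)) := by simp
    have hm2 : k ∈ ({j, k} : Set (Fin n)) := by simp
    exact Set.disjoint_left.mp hd hm1 hm2
  · exact hjk h1.symm
  · exact hik h1.symm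

theorem no_rev (hfull : KBfull X) {i j : Fin n} (h1 : E X i j) (h2 : E X j i) : False := by
  obtain ⟨hij, hs⟩ := h1
  obtain ⟨hji, ht⟩ := h2
  have hne : (⟨(i, j), hij⟩ : KBGen n) ≠ ⟨(j, i), hji⟩ := by
    simp [Subtype.ext_iff, Prod.ext_iff, hij]
  rcases hfull _ hs _ ht hne with hd | ⟨_, h2⟩ | ⟨_, h2⟩
  · have hm1 : i ∈ ({i, j} : Set (Fin n)) := by simp
    have hm2 : i ∈ ({j, i} : Set (Fin n)) := by simp
    exact Set.disjoint_left.mp hd hm1 hm2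
  · exact h2 rfl
  · exact h2 rfl

theorem chain_elem {L : List (Fin n)} (h : L.Chain' (E X)) {k : ℕ} (hk : k + 1 < L.length) :
    E X (L[k]'(by omega)) (L[k + 1]'hk) := by
  have := List.isChain_iff_getElem.mp h k (by omega)
  simpa [List.get_eq_getElem] using this

theorem step_notmem (hfull : KBfull X) {L : List (Fin n)} (hL : L ≠ []) (hnd : L.Nodup)
    (hch : L.Chain' (E X)) (hhead : ∀ c, ¬ E X c (L.head hL)) {c : Fin n}
    (hc : E X (L.getLast hL) c) : c ∉ L := by
  intro hmem
  obtain ⟨k, hk, rfl⟩ := List.mem_iff_getElem.mp hmem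
  rcases Nat.eq_zero_or_pos k with rfl | hk0
  · exact hhead _ (by rwa [List.head_eq_getElem])
  · have h1 : E X (L[k - 1]'(by omega)) (L[k]'hk) := by
      have := chain_elem hch (k := k - 1) (by omega)
      convert this using 3 <;> omega
    have h2 : E X (L[L.length - 1]'(by omega)) (L[k]'hk) := by
      rwa [List.getLast_eq_getElem] at hc
    have h3 := in_unique hfull h1 h2
    have h4 : k - 1 = L.length - 1 := by
      have hinj := List.nodup_iff_injective_getElem.mp hnd
      have := hinj (a₁ := ⟨k - 1, by omega⟩) (a₂ := ⟨L.length - 1, by omega⟩) h3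
      simpa using this
    omega

theorem extend_path (hfull : KBfull X) :
    ∀ (fuel : ℕ) (L : List (Fin n)) (hL : L ≠ []), n - L.length ≤ fuel → L.Nodup →
      L.Chain' (E X) → (∀ c, ¬ E X c (L.head hL)) →
      ∃ (M : List (Fin n)) (hM : M ≠ []), M.Nodup ∧ M.Chain' (E X) ∧
        M.head hM = L.head hL ∧ (∀ c, ¬ E X (M.getLast hM) c) ∧ L.length ≤ M.length := by
  intro fuel
  induction fuel with
  | zero =>
    intro L hL hfuel hnd hch hhead
    by_cases hsucc : ∃ c, E X (L.getLast hL) c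
    · obtain ⟨c, hc⟩ := hsucc
      have hnotmem := step_notmem hfull hL hnd hch hhead hc
      have hdisj : L.Disjoint [c] := by
        intro a ha hac
        simp at hac
        subst hac
        exact hnotmem ha
      have hnd' : (L ++ [c]).Nodup := hnd.append (List.nodup_singleton c) hdisj
      have hlen := hnd'.length_le_card
      simp [Fintype.card_fin] at hlen
      omega
    · exact ⟨L, hL, hnd, hch, rfl, fun c hc => hsucc ⟨c, hc⟩, le_refl _⟩
  | succ fuel ih =>
    intro L hL hfuel hnd hch hhead
    by_cases hsucc : ∃ c, E X (L.getLast hL) c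
    · obtain ⟨c, hc⟩ := hsucc
      have hnotmem := step_notmem hfull hL hnd hch hhead hc
      have hL' : L ++ [c] ≠ [] := by simp
      have hdisj : L.Disjoint [c] := by
        intro a ha hac
        simp at hac
        subst hac
        exact hnotmem ha
      have hnd' : (L ++ [c]).Nodup := hnd.append (List.nodup_singleton c) hdisj
      have hch' : (L ++ [c]).Chain' (E X) := by
        refine List.isChain_append.mpr ?_
        refine ⟨hch, List.isChain_singleton c, ?_⟩
        intro x hx y hy
        rw [List.getLast?_eq_getLast hL] at hx
        simp at hx hy
        rw [← hx, ← hy]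
        exact hc
      have hhead' : (L ++ [c]).head hL' = L.head hL := List.head_append_left hL
      obtain ⟨M, hM, h1, h2, h3, h4, h5⟩ := ih (L ++ [c]) hL'
        (by simp; omega) hnd' hch' (fun d hd => hhead d (by rwa [hhead'] at hd))
      refine ⟨M, hM, h1, h2, by rw [h3, hhead'], h4, by simp at h5; omega⟩
    · exact ⟨L, hL, hnd, hch, rfl, fun c hc => hsucc ⟨c, hc⟩, le_refl _⟩

theorem mem_E {s : KBGen n} (hs : s ∈ X) : E X s.1.1 s.1.2 := ⟨s.2, hs⟩

/-- Extend a nodup list over `Fin n` to a permutation of `Fin n`. -/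
theorem exists_perm (L : List (Fin n)) (hnd : L.Nodup) :
    ∃ g : Equiv.Perm (Fin n), ∀ (k : ℕ) (hk : k < L.length) (hkn : k < n),
      g ⟨k, hkn⟩ = L[k]'hk := by
  classical
  set F : List (Fin n) := L ++ (List.finRange n).filter (· ∉ L) with hF
  have hndF : F.Nodup := by
    refine hnd.append ((List.nodup_finRange n).filter _) ?_
    intro a ha hb
    simp only [List.mem_filter, decide_not, List.mem_finRange, true_and,
      Bool.not_eq_true', decide_eq_false_iff_not] at hb
    exact hb ha
  have hall : ∀ x : Fin n, x ∈ F := by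
    intro x
    by_cases hx : x ∈ L
    · exact List.mem_append_left _ hx
    · refine List.mem_append_right _ ?_
      simp [List.mem_filter, hx]
  have hlenF : F.length = n := by
    have h1 := List.toFinset_card_of_nodup hndF
    have h2 : F.toFinset = Finset.univ := by
      ext x; simp [hall x]
    rw [h2] at h1
    simpa using h1.symm
  have hinj : Function.Injective (fun i : Fin n => F.get (Fin.cast hlenF.symm i)) := by
    have := List.nodup_iff_injective_get.mp hndF
    exact this.comp (Fin.cast_injective _)
  refine ⟨Equiv.ofBijective _ ((Finite.injective_iff_bijective).mp hinj), ?_⟩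
  intro k hk hkn
  show F.get (Fin.cast hlenF.symm ⟨k, hkn⟩) = L[k]'hk
  simp only [List.get_eq_getElem]
  exact List.getElem_append_left hk

theorem path_absorb (hfull : KBfull X) {M : List (Fin n)} (hM : M ≠ []) (hnd : M.Nodup)
    (hch : M.Chain' (E X)) (hhead : ∀ c, ¬ E X c (M.head hM))
    (hlast : ∀ c, ¬ E X (M.getLast hM) c) {s : KBGen n} (hs : s ∈ X)
    (htouch : s.1.1 ∈ M ∨ s.1.2 ∈ M) :
    ∃ (k : ℕ) (h : k + 1 < M.length), s.1.1 = M[k]'(by omega) ∧ s.1.2 = M[k + 1]'h := by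
  have hE := mem_E hs
  rcases htouch with h | h
  · obtain ⟨k, hk, hkv⟩ := List.mem_iff_getElem.mp h
    by_cases hk1 : k + 1 < M.length
    · have hc := chain_elem hch hk1
      rw [hkv] at hc
      exact ⟨k, hk1, hkv.symm, out_unique hfull hE hc⟩
    · exfalso
      have hkl : k = M.length - 1 := by omega
      apply hlast s.1.2
      rw [List.getLast_eq_getElem]
      have : M[M.length - 1]'(by omega) = s.1.1 := by rw [← hkv]; congr 1; omega
      rw [this]
      exact hE
  · obtain ⟨k, hk, hkv⟩ := List.mem_iff_getElem.mp h
    rcases Nat.eq_zero_or_pos k with rfl | hk0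
    · exfalso
      apply hhead s.1.1
      rw [List.head_eq_getElem, hkv]
      exact hE
    · have hk1 : (k - 1) + 1 < M.length := by omega
      have hc := chain_elem hch hk1
      have hv' : M[(k - 1) + 1]'hk1 = s.1.2 := by rw [← hkv]; congr 1; omega
      rw [hv'] at hc
      exact ⟨k - 1, hk1, in_unique hfull hE hc, hv'.symm⟩

theorem cycle_absorb (hfull : KBfull X) {C : List (Fin n)} (hlen : 3 ≤ C.length)
    (hnd : C.Nodup) (hch : C.Chain' (E X))
    (hclose : E X (C[C.length - 1]'(by omega)) (C[0]'(by omega))) {s : KBGen n} (hs : s ∈ X)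
    (htouch : s.1.1 ∈ C ∨ s.1.2 ∈ C) :
    (∃ (k : ℕ) (h : k + 1 < C.length), s.1.1 = C[k]'(by omega) ∧ s.1.2 = C[k + 1]'h) ∨
      (s.1.1 = C[C.length - 1]'(by omega) ∧ s.1.2 = C[0]'(by omega)) := by
  have hE := mem_E hs
  rcases htouch with h | h
  · obtain ⟨k, hk, hkv⟩ := List.mem_iff_getElem.mp h
    by_cases hk1 : k + 1 < C.length
    · have hc := chain_elem hch hk1
      rw [hkv] at hc
      exact Or.inl ⟨k, hk1, hkv.symm, out_unique hfull hE hc⟩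
    · right
      have hkl : k = C.length - 1 := by omega
      have h1 : s.1.1 = C[C.length - 1]'(by omega) := by
        rw [← hkv]; congr 1 <;> omega
      refine ⟨h1, ?_⟩
      rw [h1] at hE
      exact out_unique hfull hE hclose
  · obtain ⟨k, hk, hkv⟩ := List.mem_iff_getElem.mp h
    rcases Nat.eq_zero_or_pos k with rfl | hk0
    · right
      rw [hkv] at hclose
      exact ⟨in_unique hfull hE hclose, hkv.symm⟩
    · have hk1 : (k - 1) + 1 < C.length := by omega
      have hc := chain_elem hch hk1
      have hv' : C[(k - 1) + 1]'hk1 = s.1.2 := by rw [← hkv]; congr 1; omega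
      rw [hv'] at hc
      exact Or.inl ⟨k - 1, hk1, in_unique hfull hE hc, hv'.symm⟩

theorem path_final (hfull : KBfull X) (hind : KBindecomposable X)
    {M : List (Fin n)} (hM : M ≠ []) (hnd : M.Nodup) (hch : M.Chain' (E X))
    (hhead : ∀ c, ¬ E X c (M.head hM)) (hlast : ∀ c, ¬ E X (M.getLast hM) c)
    (hseed : ∃ b, E X (M.head hM) b) :
    ∃ (g : Equiv.Perm (Fin n)) (m : ℕ), 2 ≤ m ∧ m ≤ n ∧
      (X = permGen g '' Zseg n m ∨ (3 ≤ m ∧ X = permGen g '' Zcycle n m)) := by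
  have hmn : M.length ≤ n := by simpa using hnd.length_le_card
  obtain ⟨b, hb⟩ := hseed
  set s0 : KBGen n := ⟨(M.head hM, b), hb.1⟩ with hs0def
  have hs0 : s0 ∈ X := hb.2
  have hs0t : s0.1.1 ∈ M := List.head_mem hM
  obtain ⟨k0, hk0, _⟩ := path_absorb hfull hM hnd hch hhead hlast hs0 (Or.inl hs0t)
  -- every element of `X` touches `M`
  have key : ∀ s ∈ X, s.1.1 ∈ M ∨ s.1.2 ∈ M := by
    by_contra hcon
    push_neg at hcon
    obtain ⟨t, ht, ht1, ht2⟩ := hcon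
    apply hind
    refine ⟨{s ∈ X | s.1.1 ∈ M ∨ s.1.2 ∈ M}, {s ∈ X | s.1.1 ∉ M ∧ s.1.2 ∉ M},
      ⟨s0, hs0, Or.inl hs0t⟩, ⟨t, ht, ht1, ht2⟩, ?_, ?_⟩
    · ext s
      constructor
      · intro hs
        by_cases h : s.1.1 ∈ M ∨ s.1.2 ∈ M
        · exact Or.inl ⟨hs, h⟩
        · push_neg at h
          exact Or.inr ⟨hs, h⟩
      · rintro (⟨hs, _⟩ | ⟨hs, _⟩) <;> exact hs
    · rw [Set.disjoint_left]
      rintro x hx1 hx2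
      simp only [KBsuppSet, Set.mem_iUnion, KBsupp] at hx1 hx2
      obtain ⟨s, ⟨hsX, hsM⟩, hxs⟩ := hx1
      obtain ⟨u, ⟨huX, hu1, hu2⟩, hxu⟩ := hx2
      obtain ⟨k, hk, e1, e2⟩ := path_absorb hfull hM hnd hch hhead hlast hsX hsM
      have hxM : x ∈ M := by
        rcases hxs with rfl | rfl
        · rw [e1]; exact List.getElem_mem _
        · rw [e2]; exact List.getElem_mem _
      rcases hxu with rfl | rfl
      · exact hu1 hxM
      · exact hu2 hxM
  obtain ⟨g, gspec⟩ := exists_perm M hnd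
  refine ⟨g, M.length, by omega, hmn, Or.inl ?_⟩
  ext s
  constructor
  · intro hs
    obtain ⟨k, hk1, e1, e2⟩ := path_absorb hfull hM hnd hch hhead hlast hs (key s hs)
    have hkn : k < n := by omega
    have hk1n : k + 1 < n := by omega
    refine ⟨⟨(⟨k, hkn⟩, ⟨k + 1, hk1n⟩), Fin.ne_of_val_ne (by simp)⟩, ⟨rfl, hk1⟩, ?_⟩
    exact Subtype.ext (Prod.ext ((gspec k (by omega) hkn).trans e1.symm)
      ((gspec (k + 1) hk1 hk1n).trans e2.symm))
  · rintro ⟨t, ⟨htz1, htz2⟩, rfl⟩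
    have hk1 : (t.1.1 : ℕ) + 1 < M.length := by omega
    obtain ⟨hne, hmem⟩ := chain_elem hch hk1
    have e1 : g t.1.1 = M[(t.1.1 : ℕ)]'(by omega) := by
      have := gspec (t.1.1 : ℕ) (by omega) t.1.1.isLt
      rwa [Fin.eta] at this
    have e2 : g t.1.2 = M[(t.1.1 : ℕ) + 1]'hk1 := by
      have := gspec (t.1.2 : ℕ) (by omega) t.1.2.isLt
      rw [Fin.eta] at this
      rw [this]
      congr 1
      omega
    have : permGen g t = ⟨(M[(t.1.1 : ℕ)]'(by omega), M[(t.1.1 : ℕ) + 1]'hk1), hne⟩ :=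
      Subtype.ext (Prod.ext e1 e2)
    rw [this]
    exact hmem

theorem cycle_final (hfull : KBfull X) (hind : KBindecomposable X)
    {C : List (Fin n)} (hlen : 3 ≤ C.length) (hnd : C.Nodup) (hch : C.Chain' (E X))
    (hclose : E X (C[C.length - 1]'(by omega)) (C[0]'(by omega))) :
    ∃ (g : Equiv.Perm (Fin n)) (m : ℕ), 2 ≤ m ∧ m ≤ n ∧
      (X = permGen g '' Zseg n m ∨ (3 ≤ m ∧ X = permGen g '' Zcycle n m)) := by
  have hmn : C.length ≤ n := by simpa using hnd.length_le_card
  set s0 : KBGen n := ⟨(C[C.length - 1]'(by omega), C[0]'(by omega)), hclose.1⟩ with hs0def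
  have hs0 : s0 ∈ X := hclose.2
  have hs0t : s0.1.1 ∈ C := List.getElem_mem _
  -- every element of `X` touches `C`
  have key : ∀ s ∈ X, s.1.1 ∈ C ∨ s.1.2 ∈ C := by
    by_contra hcon
    push_neg at hcon
    obtain ⟨t, ht, ht1, ht2⟩ := hcon
    apply hind
    refine ⟨{s ∈ X | s.1.1 ∈ C ∨ s.1.2 ∈ C}, {s ∈ X | s.1.1 ∉ C ∧ s.1.2 ∉ C},
      ⟨s0, hs0, Or.inl hs0t⟩, ⟨t, ht, ht1, ht2⟩, ?_, ?_⟩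
    · ext s
      constructor
      · intro hs
        by_cases h : s.1.1 ∈ C ∨ s.1.2 ∈ C
        · exact Or.inl ⟨hs, h⟩
        · push_neg at h
          exact Or.inr ⟨hs, h⟩
      · rintro (⟨hs, _⟩ | ⟨hs, _⟩) <;> exact hs
    · rw [Set.disjoint_left]
      rintro x hx1 hx2
      simp only [KBsuppSet, Set.mem_iUnion, KBsupp] at hx1 hx2
      obtain ⟨s, ⟨hsX, hsC⟩, hxs⟩ := hx1
      obtain ⟨u, ⟨huX, hu1, hu2⟩, hxu⟩ := hx2
      have hxC : x ∈ C := by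
        rcases cycle_absorb hfull hlen hnd hch hclose hsX hsC with ⟨k, hk, e1, e2⟩ | ⟨e1, e2⟩ <;>
          rcases hxs with rfl | rfl
        · rw [e1]; exact List.getElem_mem _
        · rw [e2]; exact List.getElem_mem _
        · rw [e1]; exact List.getElem_mem _
        · rw [e2]; exact List.getElem_mem _
      rcases hxu with rfl | rfl
      · exact hu1 hxC
      · exact hu2 hxC
  obtain ⟨g, gspec⟩ := exists_perm C hnd
  refine ⟨g, C.length, by omega, hmn, Or.inr ⟨hlen, ?_⟩⟩
  ext s
  constructor
  · intro hs
    rcases cycle_absorb hfull hlen hnd hch hclose hs (key s hs) with ⟨k, hk1, e1, e2⟩ | ⟨e1, e2⟩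
    · have hkn : k < n := by omega
      have hk1n : k + 1 < n := by omega
      refine ⟨⟨(⟨k, hkn⟩, ⟨k + 1, hk1n⟩), Fin.ne_of_val_ne (by simp)⟩,
        Or.inl ⟨rfl, hk1⟩, ?_⟩
      exact Subtype.ext (Prod.ext ((gspec k (by omega) hkn).trans e1.symm)
        ((gspec (k + 1) hk1 hk1n).trans e2.symm))
    · refine ⟨⟨(⟨C.length - 1, by omega⟩, ⟨0, by omega⟩), Fin.ne_of_val_ne (by simp; omega)⟩,
        Or.inr ⟨rfl, rfl⟩, ?_⟩
      exact Subtype.ext (Prod.ext ((gspec (C.length - 1) (by omega) (by omega)).trans e1.symm)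
        ((gspec 0 (by omega) (by omega)).trans e2.symm))
  · rintro ⟨t, htz | htz, rfl⟩
    · obtain ⟨htz1, htz2⟩ := htz
      have hk1 : (t.1.1 : ℕ) + 1 < C.length := by omega
      obtain ⟨hne, hmem⟩ := chain_elem hch hk1
      have e1 : g t.1.1 = C[(t.1.1 : ℕ)]'(by omega) := by
        have := gspec (t.1.1 : ℕ) (by omega) t.1.1.isLt
        rwa [Fin.eta] at this
      have e2 : g t.1.2 = C[(t.1.1 : ℕ) + 1]'hk1 := by
        have := gspec (t.1.2 : ℕ) (by omega) t.1.2.isLt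
        rw [Fin.eta] at this
        rw [this]
        congr 1
        omega
      have : permGen g t = ⟨(C[(t.1.1 : ℕ)]'(by omega), C[(t.1.1 : ℕ) + 1]'hk1), hne⟩ :=
        Subtype.ext (Prod.ext e1 e2)
      rw [this]
      exact hmem
    · obtain ⟨htz1, htz2⟩ := htz
      have e1 : g t.1.1 = C[C.length - 1]'(by omega) := by
        have := gspec (t.1.1 : ℕ) (by omega) t.1.1.isLt
        rw [Fin.eta] at this
        rw [this]
        congr 1
      have e2 : g t.1.2 = C[0]'(by omega) := by
        have := gspec (t.1.2 : ℕ) (by omega) t.1.2.isLt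
        rw [Fin.eta] at this
        rw [this]
        congr 1
      have : permGen g t = ⟨(C[C.length - 1]'(by omega), C[0]'(by omega)), hclose.1⟩ :=
        Subtype.ext (Prod.ext e1 e2)
      rw [this]
      exact hclose.2

/-- One backward step along `X`, when every source is also a target. -/
noncomputable def predStep (X : Set (KBGen n))
    (hB : ∀ a : Fin n, (∃ b, E X a b) → ∃ c, E X c a) :
    {x : Fin n // ∃ b, E X x b} → {x : Fin n // ∃ b, E X x b} :=
  fun x => ⟨(hB x.1 x.2).choose, ⟨x.1, (hB x.1 x.2).choose_spec⟩⟩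

theorem predStep_spec (X : Set (KBGen n)) (hB : ∀ a : Fin n, (∃ b, E X a b) → ∃ c, E X c a)
    (x : {x : Fin n // ∃ b, E X x b}) : E X (predStep X hB x).1 x.1 :=
  (hB x.1 x.2).choose_spec

end KBaux

/-- If `X` is a full and indecomposable nonempty subset of the
generating set `S` of `KB n`, then there are a permutation `g ∈ S_n` and an integer
`2 ≤ m ≤ n` such that either `X = g · Z_m`, or `X = g · Z̃_m` with `m ≥ 3`. -/
theorem full_indecomposable_classification (n : ℕ) (X : Set (KBGen n))
    (hne : X.Nonempty) (hfull : KBfull X) (hind : KBindecomposable X) :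
    ∃ (g : Equiv.Perm (Fin n)) (m : ℕ), 2 ≤ m ∧ m ≤ n ∧
      (X = permGen g '' Zseg n m ∨ (3 ≤ m ∧ X = permGen g '' Zcycle n m)) := by
  classical
  by_cases hA : ∃ a : Fin n, (∃ b, KBaux.E X a b) ∧ ∀ c, ¬ KBaux.E X c a
  · -- there is a source which is not a target: `X` is a path
    obtain ⟨a, ⟨b, hab⟩, hnopred⟩ := hA
    have h1 : ([a] : List (Fin n)) ≠ [] := by simp
    obtain ⟨M, hM, hnd, hch, hheq, hlast, _⟩ :=
      KBaux.extend_path hfull n [a] h1 (by simp) (List.nodup_singleton a)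
        (List.isChain_singleton a) (by simpa using hnopred)
    have hheadM : M.head hM = a := by simpa using hheq
    have hhead' : ∀ c, ¬ KBaux.E X c (M.head hM) := by
      rw [hheadM]; exact hnopred
    exact KBaux.path_final hfull hind hM hnd hch hhead' hlast ⟨b, by rw [hheadM]; exact hab⟩
  · -- every source is a target: `X` is a cycle
    push_neg at hA
    obtain ⟨s₀, hs₀⟩ := hne
    set v : ℕ → Fin n :=
      fun k => ((KBaux.predStep X hA)^[k] ⟨s₀.1.1, ⟨s₀.1.2, KBaux.mem_E hs₀⟩⟩).1 with hv
    have hspec : ∀ k, KBaux.E X (v (k + 1)) (v k) := by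
      intro k
      have h2 : (KBaux.predStep X hA)^[k + 1] ⟨s₀.1.1, ⟨s₀.1.2, KBaux.mem_E hs₀⟩⟩ =
          KBaux.predStep X hA ((KBaux.predStep X hA)^[k] ⟨s₀.1.1, ⟨s₀.1.2, KBaux.mem_E hs₀⟩⟩) :=
        Function.iterate_succ_apply' _ _ _
      rw [hv]
      simp only [h2]
      exact KBaux.predStep_spec X hA _
    have main : ∃ q, 1 ≤ q ∧ v 0 = v q ∧ ∀ i j, i < j → j < q → v i ≠ v j := by
      have hQex : ∃ q, ∃ p, p < q ∧ v p = v q := by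
        obtain ⟨k, l, hkl, hvkl⟩ := Finite.exists_ne_map_eq_of_infinite v
        rcases lt_or_gt_of_ne hkl with h | h
        · exact ⟨l, k, h, hvkl⟩
        · exact ⟨k, l, h, hvkl.symm⟩
      obtain ⟨p, hpq, hvpq⟩ := Nat.find_spec hQex
      have hdist : ∀ i j, i < j → j < Nat.find hQex → v i ≠ v j := fun i j hij hj hvij =>
        absurd ⟨i, hij, hvij⟩ (Nat.find_min hQex hj)
      have hp0 : p = 0 := by
        by_contra hp
        have e1 : KBaux.E X (v p) (v (p - 1)) := by
          have h1 : p = (p - 1) + 1 := by omega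
          rw [h1]
          exact hspec _
        have e2 : KBaux.E X (v (Nat.find hQex)) (v (Nat.find hQex - 1)) := by
          have h1 : Nat.find hQex = (Nat.find hQex - 1) + 1 := by omega
          rw [h1]
          exact hspec _
        rw [hvpq] at e1
        have h3 := KBaux.out_unique hfull e1 e2
        exact absurd ⟨p - 1, by omega, h3⟩ (Nat.find_min hQex (show Nat.find hQex - 1 < _ by omega))
      subst hp0
      exact ⟨Nat.find hQex, hpq, hvpq, hdist⟩
    obtain ⟨q, hq1, hvq, hdist⟩ := main
    have hq3 : 3 ≤ q := by
      by_contra h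
      have h12 : q = 1 ∨ q = 2 := by omega
      rcases h12 with rfl | rfl
      · exact KBaux.E_ne (hspec 0) hvq.symm
      · have e1 := hspec 0
        have e2 := hspec 1
        rw [← hvq] at e2
        exact KBaux.no_rev hfull e2 e1
    set C : List (Fin n) := (List.range q).map (fun t => v (q - 1 - t)) with hC
    have hlenC : C.length = q := by simp [hC]
    have hCget : ∀ (i : ℕ) (h : i < C.length), C[i]'h = v (q - 1 - i) := by
      intro i h
      simp [hC]
    have hndC : C.Nodup := by
      rw [List.nodup_iff_injective_getElem]
      rintro ⟨i, hi⟩ ⟨j, hj⟩ hij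
      simp only [hCget] at hij
      have hiq : i < q := by omega
      have hjq : j < q := by omega
      have : q - 1 - i = q - 1 - j := by
        by_contra hne
        rcases Nat.lt_or_ge (q - 1 - i) (q - 1 - j) with h1 | h1
        · exact hdist _ _ h1 (by omega) hij
        · exact hdist _ _ (by omega) (by omega) hij.symm
      simpa using (show i = j by omega)
    have hchC : C.Chain' (KBaux.E X) := by
      refine List.isChain_iff_getElem.mpr ?_
      intro i hi
      simp only [List.get_eq_getElem, hCget]
      have h1 : q - 1 - i = (q - 1 - (i + 1)) + 1 := by
        rw [hlenC] at hi
        omega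
      rw [h1]
      exact hspec _
    have hlen3 : 3 ≤ C.length := by omega
    have hclose : KBaux.E X (C[C.length - 1]'(by omega)) (C[0]'(by omega)) := by
      have e1 : C[C.length - 1]'(by omega) = v 0 := by
        rw [hCget]
        congr 1
        omega
      have e2 : C[0]'(by omega) = v (q - 1) := by
        rw [hCget]
        norm_num
      rw [e1, e2, hvq]
      have h1 : q = (q - 1) + 1 := by omega
      rw [h1]
      exact hspec _
    exact KBaux.cycle_final hfull hind hlen3 hndC hchC hclose
end
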